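/- Let ε ∈ (0,1), let u0 ∈ ℝ with 0 < |u0| < 1, and let 0 < h ≤ ε². Let (u_n) be any real sequence with u_0 = u0 satisfying the modified Crank-Nicolson recurrence (u_n - u_{n-1})/h + (1/ε²)·((u_n + u_{n-1})/2)·((u_n² + u_{n-1}²)/2 - 1) = 0 for all n ≥ 1. Then: if 0 < u0 < 1, 0 < u_n ≤ 1 for all n and (u_n) is nondecreasing; if -1 < u0 < 0, -1 ≤ u_n < 0 for all n and (u_n) is nonincreasing; and in both cases u_n converges to sign(u0) as n → ∞. -/

import Mathlib

open Filter

private lemma cn_step (l a v : ℝ) (hl0 : 0 < l) (hl1 : l ≤ 1)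
    (ha0 : 0 < a) (ha1 : a ≤ 1)
    (heq : v - a + l * ((v + a) / 2) * ((v ^ 2 + a ^ 2) / 2 - 1) = 0) :
    a ≤ v ∧ v ≤ 1 := by
  have hB : 0 < 1 - l / 2 + l / 4 * (v ^ 2 + 2 * a * v + 3 * a ^ 2) := by
    nlinarith [sq_nonneg (v + a), sq_nonneg a]
  have hid : (v - a) * (1 - l / 2 + l / 4 * (v ^ 2 + 2 * a * v + 3 * a ^ 2))
      = l * a * (1 - a ^ 2) := by linear_combination heq
  have hrhs : 0 ≤ l * a * (1 - a ^ 2) :=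
    mul_nonneg (mul_pos hl0 ha0).le (by nlinarith)
  have hav : a ≤ v := by
    by_contra hc
    push_neg at hc
    nlinarith [mul_pos (sub_pos.mpr hc) hB]
  have hq : 0 ≤ v ^ 2 + v + 1 + a * v + a + a ^ 2 := by
    nlinarith [sq_nonneg (3 * (v + 1) + 2 * a), sq_nonneg (v - 1), sq_nonneg a]
  have hB' : 0 < 1 - l / 2 + l / 4 * (v ^ 2 + v + 1 + a * v + a + a ^ 2) := by nlinarith
  have hid' : (v - 1) * (1 - l / 2 + l / 4 * (v ^ 2 + v + 1 + a * v + a + a ^ 2))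
      = -((1 - a) * (1 - l * (1 + a) ^ 2 / 4)) := by linear_combination heq
  have h4 : (1 + a) ^ 2 ≤ 4 := by nlinarith
  have hl4 : l * (1 + a) ^ 2 ≤ (1 + a) ^ 2 := mul_le_of_le_one_left (sq_nonneg _) hl1
  have hF1 : 0 ≤ (1 - a) * (1 - l * (1 + a) ^ 2 / 4) :=
    mul_nonneg (by linarith) (by linarith)
  refine ⟨hav, ?_⟩
  by_contra hc
  push_neg at hc
  nlinarith [mul_pos (sub_pos.mpr hc) hB']

private lemma cn_pos (ε : ℝ) (hε0 : 0 < ε)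
    (u0 : ℝ) (h0 : 0 < u0) (h1 : u0 < 1)
    (h : ℝ) (hh0 : 0 < h) (hh1 : h ≤ ε ^ 2)
    (u : ℕ → ℝ) (hinit : u 0 = u0)
    (hrec : ∀ n : ℕ, (u (n + 1) - u n) / h
      + (1 / ε ^ 2) * ((u (n + 1) + u n) / 2) * (((u (n + 1)) ^ 2 + (u n) ^ 2) / 2 - 1) = 0) :
    (∀ n : ℕ, 0 < u n ∧ u n ≤ 1) ∧ Monotone u ∧
      Tendsto u atTop (nhds 1) := by
  have hε2 : (0 : ℝ) < ε ^ 2 := by positivity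
  set l : ℝ := h / ε ^ 2 with hl
  have hl0 : 0 < l := div_pos hh0 hε2
  have hl1 : l ≤ 1 := (div_le_one hε2).mpr hh1
  have heq : ∀ n : ℕ, u (n + 1) - u n
      + l * ((u (n + 1) + u n) / 2) * ((u (n + 1) ^ 2 + u n ^ 2) / 2 - 1) = 0 := by
    intro n
    have H := hrec n
    have hh0' : h ≠ 0 := ne_of_gt hh0
    have hε2' : ε ^ 2 ≠ 0 := ne_of_gt hε2
    field_simp [hl] at H ⊢
    rw [hl]
    field_simp
    linarith
  have bnd : ∀ n : ℕ, 0 < u n ∧ u n ≤ 1 := by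
    intro n
    induction n with
    | zero => rw [hinit]; exact ⟨h0, le_of_lt h1⟩
    | succ k ih =>
      obtain ⟨s1, s2⟩ := cn_step l (u k) (u (k + 1)) hl0 hl1 ih.1 ih.2 (heq k)
      exact ⟨lt_of_lt_of_le ih.1 s1, s2⟩
  have mono : Monotone u :=
    monotone_nat_of_le_succ fun n =>
      (cn_step l (u n) (u (n + 1)) hl0 hl1 (bnd n).1 (bnd n).2 (heq n)).1
  have hbdd : BddAbove (Set.range u) := ⟨1, by rintro x ⟨n, rfl⟩; exact (bnd n).2⟩
  have hconv : Tendsto u atTop (nhds (⨆ n, u n)) := tendsto_atTop_ciSup mono hbdd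
  set L : ℝ := ⨆ n, u n with hLdef
  have hL1 : L ≤ 1 := ciSup_le fun n => (bnd n).2
  have hL0 : 0 < L := lt_of_lt_of_le (bnd 0).1 (le_ciSup hbdd 0)
  have hconv' : Tendsto (fun n => u (n + 1)) atTop (nhds L) :=
    hconv.comp (tendsto_add_atTop_nat 1)
  have hT : Tendsto (fun n => u (n + 1) - u n
      + l * ((u (n + 1) + u n) / 2) * ((u (n + 1) ^ 2 + u n ^ 2) / 2 - 1)) atTop
      (nhds (L - L + l * ((L + L) / 2) * ((L ^ 2 + L ^ 2) / 2 - 1))) := by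
    exact (hconv'.sub hconv).add
      ((tendsto_const_nhds.mul ((hconv'.add hconv).div_const 2)).mul
        ((((hconv'.pow 2).add (hconv.pow 2)).div_const 2).sub tendsto_const_nhds))
  have hfun : (fun n => u (n + 1) - u n
      + l * ((u (n + 1) + u n) / 2) * ((u (n + 1) ^ 2 + u n ^ 2) / 2 - 1))
      = fun _ : ℕ => (0 : ℝ) := funext heq
  rw [hfun] at hT
  have hLeq : L - L + l * ((L + L) / 2) * ((L ^ 2 + L ^ 2) / 2 - 1) = 0 :=
    (tendsto_nhds_unique tendsto_const_nhds hT).symm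
  have hLone : L = 1 := by
    by_contra hc
    have hLlt : L < 1 := lt_of_le_of_ne hL1 hc
    nlinarith [mul_pos (mul_pos hl0 hL0) (mul_pos (sub_pos.mpr hLlt) (show 0 < 1 + L by linarith))]
  exact ⟨bnd, mono, hLone ▸ hconv⟩

/-- Modified Crank-Nicolson with `0 < |u0| < 1` and `0 < h ≤ ε²`: the numerical solution
stays between `0` and `sign u0`, is monotone, and converges to `sign u0`. -/
theorem mod_crank_nicolson_monotone_small_initial
    (ε : ℝ) (hε0 : 0 < ε) (hε1 : ε < 1)
    (u0 : ℝ) (hu0 : 0 < |u0|) (hu0' : |u0| < 1)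
    (h : ℝ) (hh0 : 0 < h) (hh1 : h ≤ ε ^ 2)
    (u : ℕ → ℝ) (hinit : u 0 = u0)
    (hrec : ∀ n : ℕ, (u (n + 1) - u n) / h
      + (1 / ε ^ 2) * ((u (n + 1) + u n) / 2) * (((u (n + 1)) ^ 2 + (u n) ^ 2) / 2 - 1) = 0) :
    (0 < u0 ∧ u0 < 1 → (∀ n : ℕ, 0 < u n ∧ u n ≤ 1) ∧ Monotone u) ∧
    (-1 < u0 ∧ u0 < 0 → (∀ n : ℕ, -1 ≤ u n ∧ u n < 0) ∧ Antitone u) ∧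
    Filter.Tendsto u Filter.atTop (nhds (if 0 < u0 then (1 : ℝ) else -1)) := by
  have hrecneg : ∀ n : ℕ, ((-u (n + 1)) - (-u n)) / h
      + (1 / ε ^ 2) * (((-u (n + 1)) + (-u n)) / 2) * (((-u (n + 1)) ^ 2 + (-u n) ^ 2) / 2 - 1)
      = 0 := by
    intro n
    linear_combination (-1 : ℝ) * hrec n
  refine ⟨?_, ?_, ?_⟩
  · rintro ⟨hp0, hp1⟩
    obtain ⟨b, m, _⟩ := cn_pos ε hε0 u0 hp0 hp1 h hh0 hh1 u hinit hrec
    exact ⟨b, m⟩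
  · rintro ⟨hn1, hn0⟩
    obtain ⟨b, m, _⟩ := cn_pos ε hε0 (-u0) (by linarith) (by linarith) h hh0 hh1
      (fun n => -u n) (by simp [hinit]) hrecneg
    refine ⟨fun n => ⟨by have := (b n).2; linarith, by have := (b n).1; linarith⟩, ?_⟩
    intro i j hij
    have := m hij
    simpa using this
  · rcases lt_trichotomy u0 0 with hneg | hzero | hpos
    · rw [if_neg (by linarith)]
      have hu1 : -u0 < 1 := by
        have := abs_lt.mp hu0'
        linarith [this.1]
      obtain ⟨_, _, ht⟩ := cn_pos ε hε0 (-u0) (by linarith) hu1 h hh0 hh1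
        (fun n => -u n) (by simp [hinit]) hrecneg
      have := ht.neg
      simpa using this
    · exact absurd hzero (by simpa using ne_of_gt hu0)
    · rw [if_pos hpos]
      have hu1 : u0 < 1 := lt_of_le_of_lt (le_abs_self u0) hu0'
      exact (cn_pos ε hε0 u0 hpos hu1 h hh0 hh1 u hinit hrec).2.2
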